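/- arXiv:1912.10829 — 3 statements merged into one kernel-verified Lean document; each statement's English description precedes it below -/
import Mathlib

section
/- Let X, Y : ℤ → ℝ be time series, let δmax ≥ 1 be a maximum lag, and let Δ₀ ≥ 1 be a fixed integer delay. For any coefficient vectors a, b, c indexed by i ∈ {1, …, δmax}, define the variable-lag residual r*(t) = Y(t) − ∑_{i=1}^{δmax} (aᵢ·Y(t−i) + bᵢ·X(t−i) + cᵢ·X(t−i+1−Δ₀)). Then there exist coefficient vectors a′, b′ indexed by i ∈ {1, …, δmax+Δ₀−1} such that for every t ∈ ℤ, r*(t) = Y(t) − ∑_{i=1}^{δmax+Δ₀−1} (a′ᵢ·Y(t−i) + b′ᵢ·X(t−i)); that is, when the alignment delays are all equal to the constant Δ₀, every variable-lag regression residual coincides pointwise with a fixed-lag regression residual. -/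
/-- Proposition 4.1: when all alignment delays equal a constant `Δ₀ ≥ 1`, every
variable-lag regression residual coincides pointwise with a fixed-lag regression
residual with maximum lag `δmax + Δ₀ - 1`. -/
theorem variable_lag_residual_eq_fixed_lag_residual
    (X Y : ℤ → ℝ) (δmax Δ₀ : ℕ) (hδ : 1 ≤ δmax) (hΔ : 1 ≤ Δ₀)
    (a b c : ℕ → ℝ) :
    ∃ a' b' : ℕ → ℝ, ∀ t : ℤ,
      Y t - ∑ i ∈ Finset.Icc 1 δmax,
          (a i * Y (t - (i : ℤ)) + b i * X (t - (i : ℤ))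
            + c i * X (t - (i : ℤ) + 1 - (Δ₀ : ℤ)))
      = Y t - ∑ i ∈ Finset.Icc 1 (δmax + Δ₀ - 1),
          (a' i * Y (t - (i : ℤ)) + b' i * X (t - (i : ℤ))) := by
  set N := δmax + Δ₀ - 1 with hN
  refine ⟨fun i => if i ≤ δmax then a i else 0,
          fun i => (if i ≤ δmax then b i else 0) + (if Δ₀ ≤ i then c (i - Δ₀ + 1) else 0),
          fun t => ?_⟩
  have hsub : Finset.Icc 1 δmax ⊆ Finset.Icc 1 N :=
    Finset.Icc_subset_Icc_right (by omega)
  congr 1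
  have h1 : ∑ i ∈ Finset.Icc 1 N, ((if i ≤ δmax then a i else 0) * Y (t - (i:ℤ)) +
      ((if i ≤ δmax then b i else 0) + (if Δ₀ ≤ i then c (i - Δ₀ + 1) else 0)) * X (t - (i:ℤ)))
    = ∑ i ∈ Finset.Icc 1 N,
        ((if i ≤ δmax then a i * Y (t-(i:ℤ)) + b i * X (t-(i:ℤ)) else 0)
          + (if Δ₀ ≤ i then c (i - Δ₀ + 1) * X (t - (i:ℤ)) else 0)) := by
    refine Finset.sum_congr rfl fun i _ => ?_
    by_cases h : i ≤ δmax <;> by_cases h2 : Δ₀ ≤ i <;> simp [h, h2] <;> ring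
  rw [h1, Finset.sum_add_distrib]
  have h2 : ∑ i ∈ Finset.Icc 1 N,
      (if i ≤ δmax then a i * Y (t-(i:ℤ)) + b i * X (t-(i:ℤ)) else 0)
      = ∑ i ∈ Finset.Icc 1 δmax, (a i * Y (t-(i:ℤ)) + b i * X (t-(i:ℤ))) := by
    rw [← Finset.sum_subset hsub (fun x hm hx => by
      rw [if_neg]; simp only [Finset.mem_Icc] at hm hx ⊢; omega)]
    refine Finset.sum_congr rfl fun i hi => ?_
    rw [if_pos (Finset.mem_Icc.mp hi).2]
  have h3 : ∑ i ∈ Finset.Icc 1 N,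
      (if Δ₀ ≤ i then c (i - Δ₀ + 1) * X (t - (i:ℤ)) else 0)
      = ∑ i ∈ Finset.Icc 1 δmax, c i * X (t - (i:ℤ) + 1 - (Δ₀:ℤ)) := by
    rw [← Finset.sum_subset (Finset.Icc_subset_Icc_left (le_refl Δ₀) |>.trans
      (Finset.Icc_subset_Icc (by omega) (le_refl N)))
      (fun x hx hx' => by
        rw [if_neg]; simp only [Finset.mem_Icc] at hx hx' ⊢; omega)]
    rw [Finset.sum_congr rfl (fun i hi => if_pos (Finset.mem_Icc.mp hi).1)]
    refine Finset.sum_nbij' (fun i => i - Δ₀ + 1) (fun j => j + Δ₀ - 1) ?_ ?_ ?_ ?_ ?_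
    · intro i hi; simp only [Finset.mem_Icc] at hi ⊢; omega
    · intro j hj; simp only [Finset.mem_Icc] at hj ⊢; omega
    · intro i hi; simp only [Finset.mem_Icc] at hi
      show i - Δ₀ + 1 + Δ₀ - 1 = i; omega
    · intro j hj; simp only [Finset.mem_Icc] at hj
      show j + Δ₀ - 1 - Δ₀ + 1 = j; omega
    · intro i hi
      simp only [Finset.mem_Icc] at hi
      have : ((i - Δ₀ + 1 : ℕ) : ℤ) = (i : ℤ) - Δ₀ + 1 := by push_cast [hi.1]; omega
      rw [this]
      ring_nf
  rw [← h2, ← h3, ← Finset.sum_add_distrib]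
end

section
/- Let X, Y : ℤ → ℝ be time series, δmax ≥ 1, and let Δ : ℤ → ℤ be an alignment delay sequence with 1 ≤ Δ(t) ≤ δmax and Y(t) = X(t − Δ(t)) for all t ∈ ℤ. Define the warped series X*(s) = X(s+1−Δ(s+1)). Then choosing the coefficients aᵢ = 0 and bᵢ = 0 for all i, c₁ = 1, and cᵢ = 0 for i ≥ 2, the variable-lag residual r*(t) = Y(t) − ∑_{i=1}^{δmax} (aᵢ·Y(t−i) + bᵢ·X(t−i) + cᵢ·X*(t−i)) is identically zero; in particular, its empirical variance over any finite time window is zero. -/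
/-- First half of the proof of Proposition 4.2: if `Y` is an exactly delay-aligned
copy of `X` (with delays in `[1, δmax]`), then with coefficients `a = b = 0`,
`c₁ = 1`, `cᵢ = 0` for `i ≥ 2`, the variable-lag residual is identically zero,
and hence its empirical variance over any nonempty finite window is zero. -/
theorem variable_lag_residual_zero_of_aligned
    (X Y : ℤ → ℝ) (δmax : ℕ) (hδ : 1 ≤ δmax) (Δ : ℤ → ℤ)
    (hΔ : ∀ t : ℤ, 1 ≤ Δ t ∧ Δ t ≤ (δmax : ℤ))
    (hY : ∀ t : ℤ, Y t = X (t - Δ t)) :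
    (∀ t : ℤ,
        Y t - ∑ i ∈ Finset.Icc 1 δmax,
            ((0 : ℝ) * Y (t - (i : ℤ)) + (0 : ℝ) * X (t - (i : ℤ))
              + (if i = 1 then (1 : ℝ) else 0)
                  * X ((t - (i : ℤ)) + 1 - Δ ((t - (i : ℤ)) + 1)))
          = 0) ∧
    (∀ S : Finset ℤ, S.Nonempty →
        (1 / (S.card : ℝ)) * ∑ t ∈ S,
          ((Y t - ∑ i ∈ Finset.Icc 1 δmax,
              ((0 : ℝ) * Y (t - (i : ℤ)) + (0 : ℝ) * X (t - (i : ℤ))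
                + (if i = 1 then (1 : ℝ) else 0)
                    * X ((t - (i : ℤ)) + 1 - Δ ((t - (i : ℤ)) + 1))))
            - (1 / (S.card : ℝ)) * ∑ s ∈ S,
                (Y s - ∑ i ∈ Finset.Icc 1 δmax,
                  ((0 : ℝ) * Y (s - (i : ℤ)) + (0 : ℝ) * X (s - (i : ℤ))
                    + (if i = 1 then (1 : ℝ) else 0)
                        * X ((s - (i : ℤ)) + 1 - Δ ((s - (i : ℤ)) + 1)))))^2
          = 0) := by
  have hres : ∀ t : ℤ,
      Y t - ∑ i ∈ Finset.Icc 1 δmax,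
          ((0 : ℝ) * Y (t - (i : ℤ)) + (0 : ℝ) * X (t - (i : ℤ))
            + (if i = 1 then (1 : ℝ) else 0)
                * X ((t - (i : ℤ)) + 1 - Δ ((t - (i : ℤ)) + 1)))
        = 0 := by
    intro t
    have hsum : ∑ i ∈ Finset.Icc 1 δmax,
        ((0 : ℝ) * Y (t - (i : ℤ)) + (0 : ℝ) * X (t - (i : ℤ))
          + (if i = 1 then (1 : ℝ) else 0)
              * X ((t - (i : ℤ)) + 1 - Δ ((t - (i : ℤ)) + 1)))
        = X ((t - (1 : ℤ)) + 1 - Δ ((t - (1 : ℤ)) + 1)) := by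
      rw [Finset.sum_eq_single 1]
      · simp
      · intro i hi hne; simp [hne]
      · intro h; exact absurd (Finset.mem_Icc.mpr ⟨le_refl 1, hδ⟩) h
    rw [hsum]
    have : t - (1 : ℤ) + 1 = t := by ring
    rw [this, hY t]; ring
  refine ⟨hres, fun S hS => ?_⟩
  have : ∀ t ∈ S, ((Y t - ∑ i ∈ Finset.Icc 1 δmax,
              ((0 : ℝ) * Y (t - (i : ℤ)) + (0 : ℝ) * X (t - (i : ℤ))
                + (if i = 1 then (1 : ℝ) else 0)
                    * X ((t - (i : ℤ)) + 1 - Δ ((t - (i : ℤ)) + 1))))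
            - (1 / (S.card : ℝ)) * ∑ s ∈ S,
                (Y s - ∑ i ∈ Finset.Icc 1 δmax,
                  ((0 : ℝ) * Y (s - (i : ℤ)) + (0 : ℝ) * X (s - (i : ℤ))
                    + (if i = 1 then (1 : ℝ) else 0)
                        * X ((s - (i : ℤ)) + 1 - Δ ((s - (i : ℤ)) + 1)))))^2 = 0 := by
    intro t ht
    rw [hres t, Finset.sum_congr rfl (fun s _ => hres s)]
    simp
  rw [Finset.sum_congr rfl this]
  simp
end

section
/- Let 𝒳 be a nonempty finite family of time series X_k : ℤ → ℝ (the initiators) and 𝒴 a nonempty finite family of time series U_j : ℤ → ℝ (the followers), and let t₀ ≤ t₂ ≤ t₁ be integers and ε ≥ 0. Define the aggregate time series agg(𝒮)(t) = (1/|𝒮|)·∑_{Z∈𝒮} Z(t). Suppose (1) for every X ∈ 𝒳 and every t with t₀ ≤ t ≤ t₁, |agg(𝒳)(t) − X(t)| ≤ ε, and (2) for every U ∈ 𝒴 there exists X ∈ 𝒳 such that |X(t) − U(t)| ≤ ε for every t with t₂ ≤ t ≤ t₁. Then for every t with t₂ ≤ t ≤ t₁, |agg(𝒳)(t) − agg(𝒴)(t)|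 ≤ 2ε. -/
/-- Aggregate of a finite family of time series. -/
noncomputable def agg {ι : Type*} [Fintype ι] (Z : ι → ℤ → ℝ) (t : ℤ) : ℝ :=
  (1 / (Fintype.card ι : ℝ)) * ∑ k, Z k t

/-- Quantitative content of Proposition 5.1: if every initiator stays within `ε`
of the initiators' aggregate on `[t₀, t₁]`, and every follower stays within `ε`
of some initiator on `[t₂, t₁]`, then the two aggregates stay within `2ε` of
each other on `[t₂, t₁]`. -/
theorem agg_initiators_close_agg_followers
    {ι κ : Type*} [Fintype ι] [Nonempty ι] [Fintype κ] [Nonempty κ]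
    (Xf : ι → ℤ → ℝ) (Uf : κ → ℤ → ℝ)
    (t₀ t₂ t₁ : ℤ) (h02 : t₀ ≤ t₂) (h21 : t₂ ≤ t₁) (ε : ℝ) (hε : 0 ≤ ε)
    (h1 : ∀ k : ι, ∀ t : ℤ, t₀ ≤ t → t ≤ t₁ → |agg Xf t - Xf k t| ≤ ε)
    (h2 : ∀ j : κ, ∃ k : ι, ∀ t : ℤ, t₂ ≤ t → t ≤ t₁ → |Xf k t - Uf j t| ≤ ε) :
    ∀ t : ℤ, t₂ ≤ t → t ≤ t₁ → |agg Xf t - agg Uf t| ≤ 2 * ε := by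
  intro t ht2 ht1
  have hcard : (0 : ℝ) < (Fintype.card κ : ℝ) := by
    exact_mod_cast Fintype.card_pos
  have key : ∀ j : κ, |agg Xf t - Uf j t| ≤ 2 * ε := by
    intro j
    obtain ⟨k, hk⟩ := h2 j
    calc |agg Xf t - Uf j t|
        = |(agg Xf t - Xf k t) + (Xf k t - Uf j t)| := by ring_nf
      _ ≤ |agg Xf t - Xf k t| + |Xf k t - Uf j t| := abs_add_le _ _
      _ ≤ ε + ε := add_le_add (h1 k t (le_trans h02 ht2) ht1) (hk t ht2 ht1)
      _ = 2 * ε := by ring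
  have heq : agg Xf t - agg Uf t
      = (1 / (Fintype.card κ : ℝ)) * ∑ j, (agg Xf t - Uf j t) := by
    rw [Finset.sum_sub_distrib, Finset.sum_const, Finset.card_univ]
    unfold agg
    field_simp
    rw [nsmul_eq_mul, mul_sub, mul_left_comm, mul_div_cancel₀ _ (by exact_mod_cast Fintype.card_ne_zero : (Fintype.card ι : ℝ) ≠ 0)]
    ring
  rw [heq, abs_mul, abs_of_nonneg (by positivity : (0:ℝ) ≤ 1 / (Fintype.card κ : ℝ))]
  have hsum : |∑ j, (agg Xf t - Uf j t)| ≤ (Fintype.card κ : ℝ) * (2 * ε) := by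
    calc |∑ j, (agg Xf t - Uf j t)| ≤ ∑ j, |agg Xf t - Uf j t| :=
          Finset.abs_sum_le_sum_abs _ _
      _ ≤ ∑ _j : κ, 2 * ε := Finset.sum_le_sum fun j _ => key j
      _ = (Fintype.card κ : ℝ) * (2 * ε) := by
          rw [Finset.sum_const, Finset.card_univ, nsmul_eq_mul]
  calc 1 / (Fintype.card κ : ℝ) * |∑ j, (agg Xf t - Uf j t)|
      ≤ 1 / (Fintype.card κ : ℝ) * ((Fintype.card κ : ℝ) * (2 * ε)) := by
        apply mul_le_mul_of_nonneg_left hsum (by positivity)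
    _ = 2 * ε := by field_simp
end
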